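/- Let (X,d) be a metric space, C ≥ 1, and let S ⊆ X be a finite set with at least two points such that every nonempty proper subset A ⊊ S satisfies dist(A, S \ A) < diam(S)/C. Then there exist a, b ∈ S with d(a,b) = diam(S) and a (diam(S)/C)-chain contained in S connecting a to b. -/

import Mathlib

/-- An `ε`-chain connecting `a` to `b`: a finite sequence `x_0 = a, x_1, …, x_k = b`
with `d(x_i, x_{i+1}) < ε` for each `i`. -/
def IsEpsChain {X : Type*} [PseudoMetricSpace X] (ε : ℝ) (a b : X)
    (k : ℕ) (x : Fin (k + 1) → X) : Prop :=
  x 0 = a ∧ x (Fin.last k) = b ∧ ∀ i : Fin k, dist (x i.castSucc) (x i.succ) < ε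

/-- **Chain connectivity of unseparated finite sets**: if `S` is a finite set with at
least two points such that every nonempty proper subset `A ⊊ S` satisfies
`dist(A, S \ A) < diam(S)/C`, then there are `a, b ∈ S` with `d(a,b) = diam S` and a
`(diam S / C)`-chain contained in `S` connecting `a` to `b`. -/
theorem chain_of_no_separation {X : Type*} [MetricSpace X] (C : ℝ) (hC : 1 ≤ C)
    (S : Finset X) (hS : 2 ≤ S.card)
    (hsep : ∀ A : Finset X, A.Nonempty → A ⊂ S →
      ∃ a ∈ A, ∃ b ∈ S, b ∉ A ∧ dist a b < Metric.diam (S : Set X) / C) :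
    ∃ a ∈ S, ∃ b ∈ S, dist a b = Metric.diam (S : Set X) ∧
      ∃ (k : ℕ) (x : Fin (k + 1) → X), (∀ i, x i ∈ S) ∧
        IsEpsChain (Metric.diam (S : Set X) / C) a b k x := by
  classical
  set ε := Metric.diam (S : Set X) / C with hε
  have hSne : S.Nonempty := Finset.card_pos.mp (Nat.lt_of_lt_of_le Nat.zero_lt_two hS)
  obtain ⟨⟨a, b⟩, habm, hmax⟩ := (S ×ˢ S).exists_max_image
    (fun pr => dist pr.1 pr.2) (hSne.product hSne)
  rw [Finset.mem_product] at habm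
  obtain ⟨ha, hb⟩ := habm
  have hab : dist a b = Metric.diam (S : Set X) := by
    refine le_antisymm (Metric.dist_le_diam_of_mem S.finite_toSet.isBounded ha hb) ?_
    exact Metric.diam_le_of_forall_dist_le dist_nonneg fun u hu v hv =>
      hmax (u, v) (Finset.mem_product.mpr ⟨hu, hv⟩)
  refine ⟨a, ha, b, hb, hab, ?_⟩
  -- the set of points chain-reachable from a within S
  set A := S.filter (fun y => ∃ (k : ℕ) (x : Fin (k + 1) → X),
      (∀ i, x i ∈ S) ∧ IsEpsChain ε a y k x) with hA
  have haA : a ∈ A := by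
    refine Finset.mem_filter.mpr ⟨ha, 0, fun _ => a, fun _ => ha, rfl, rfl, ?_⟩
    exact fun i => i.elim0
  have hAsub : A ⊆ S := Finset.filter_subset _ _
  have hAS : A = S := by
    by_contra hne
    obtain ⟨p, hpA, q, hqS, hqA, hd⟩ := hsep A ⟨a, haA⟩ ⟨hAsub, fun h => hne (le_antisymm hAsub h)⟩
    obtain ⟨hpS, k, x, hxS, hx0, hxl, hxstep⟩ := Finset.mem_filter.mp hpA
    apply hqA
    refine Finset.mem_filter.mpr ⟨hqS, k + 1, Fin.snoc x q, ?_, ?_, ?_, ?_⟩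
    · intro i
      refine Fin.lastCases ?_ ?_ i
      · simpa using hqS
      · intro j; simpa using hxS j
    · rw [show (0 : Fin (k + 1 + 1)) = Fin.castSucc 0 from rfl, Fin.snoc_castSucc]
      exact hx0
    · simp
    · intro i
      refine Fin.lastCases ?_ ?_ i
      · have h1 : dist (x (Fin.last k)) q < ε := by rw [hxl]; exact hd
        simpa [Fin.succ_last] using h1
      · intro j
        simp only [Fin.succ_castSucc, Fin.snoc_castSucc]
        exact hxstep j
  have hbA : b ∈ A := hAS ▸ hb
  obtain ⟨-, k, x, hxS, hchain⟩ := Finset.mem_filter.mp hbA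
  exact ⟨k, x, hxS, hchain⟩
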